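/- If every finite power of a topological space X is star-K-Menger, then X is star-K-Scheepers. -/
import Mathlib


open Set

/-- Star of a set `A` with respect to a family `P`: `St(A,P) = ⋃{B ∈ P : A ∩ B ≠ ∅}`. -/
def st {X : Type*} (A : Set X) (P : Set (Set X)) : Set X :=
  ⋃₀ {B | B ∈ P ∧ (A ∩ B).Nonempty}

/-- `U` is an open cover of the space. -/
def IsOpenCover {X : Type*} [TopologicalSpace X] (U : Set (Set X)) : Prop :=
  (∀ V ∈ U, IsOpen V) ∧ ⋃₀ U = Set.univ

/-- An ω-cover: an open cover such that every finite subset lies in some member. -/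
def IsOmegaCover {X : Type*} [TopologicalSpace X] (U : Set (Set X)) : Prop :=
  IsOpenCover U ∧ ∀ F : Set X, F.Finite → ∃ V ∈ U, F ⊆ V

/-- The star-K-Scheepers property. -/
def StarKScheepers (X : Type*) [TopologicalSpace X] : Prop :=
  ∀ U : ℕ → Set (Set X), (∀ n, IsOpenCover (U n)) →
    ∃ K : ℕ → Set X, (∀ n, IsCompact (K n)) ∧
      IsOmegaCover {S | ∃ n, S = st (K n) (U n)}

/-- The star-K-Menger property. -/
def StarKMenger (X : Type*) [TopologicalSpace X] : Prop :=
  ∀ U : ℕ → Set (Set X), (∀ n, IsOpenCover (U n)) →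
    ∃ K : ℕ → Set X, (∀ n, IsCompact (K n)) ∧
      IsOpenCover {S | ∃ n, S = st (K n) (U n)}

/-- If every finite power of `X` is star-K-Menger, then `X` is star-K-Scheepers. -/
theorem every_finite_power_starKMenger_implies_starKScheepers
    {X : Type*} [TopologicalSpace X]
    (h : ∀ k : ℕ, StarKMenger (Fin k → X)) : StarKScheepers X := by
  intro U hU
  -- product covers of finite powers
  set W : (k : ℕ) → ℕ → Set (Set (Fin k → X)) :=
    fun k n => {S | ∃ f : Fin k → Set X, (∀ j, f j ∈ U n) ∧ S = Set.univ.pi f} with hWdef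
  have hWcov : ∀ k n, IsOpenCover (W k n) := by
    intro k n
    constructor
    · rintro S ⟨f, hf, rfl⟩
      exact isOpen_set_pi Set.finite_univ (fun j _ => (hU n).1 _ (hf j))
    · apply Set.eq_univ_of_forall
      intro v
      have hv : ∀ j : Fin k, ∃ B ∈ U n, v j ∈ B := by
        intro j
        have : v j ∈ ⋃₀ U n := by rw [(hU n).2]; trivial
        exact this
      choose f hf hvf using hv
      exact ⟨Set.univ.pi f, ⟨f, hf, rfl⟩, fun j _ => hvf j⟩
  have hk : ∀ k : ℕ, ∃ L : ℕ → Set (Fin k → X),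
      (∀ m, IsCompact (L m)) ∧
      IsOpenCover {S | ∃ m, S = st (L m) (W k (Nat.pair k m))} :=
    fun k => h k (fun m => W k (Nat.pair k m)) (fun m => hWcov k (Nat.pair k m))
  choose L hLc hLcov using hk
  set K : ℕ → Set X :=
    fun n => ⋃ j : Fin n.unpair.1, (fun v => v j) '' L n.unpair.1 n.unpair.2 with hKdef
  have key : ∀ F : Set X, F.Finite → ∃ n, F ⊆ st (K n) (U n) := by
    intro F hF
    obtain ⟨k, e, he⟩ := hF.fin_embedding
    have hmem : (e : Fin k → X) ∈ ⋃₀ {S | ∃ m, S = st (L k m) (W k (Nat.pair k m))} := by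
      rw [(hLcov k).2]; trivial
    obtain ⟨S, ⟨m, rfl⟩, hmem⟩ := hmem
    refine ⟨Nat.pair k m, ?_⟩
    obtain ⟨B, ⟨⟨f, hf, rfl⟩, w, hwL, hwB⟩, heB⟩ := hmem
    intro x hx
    rw [← he] at hx
    obtain ⟨j, rfl⟩ := hx
    refine ⟨f j, ⟨hf j, ?_⟩, heB j (Set.mem_univ j)⟩
    refine ⟨w j, ?_, hwB j (Set.mem_univ j)⟩
    have hKeq : K (Nat.pair k m) = ⋃ j : Fin k, (fun v => v j) '' L k m := by
      rw [hKdef]; beta_reduce; rw [Nat.unpair_pair]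
    rw [hKeq]
    exact Set.mem_iUnion.2 ⟨j, ⟨w, hwL, rfl⟩⟩
  refine ⟨K, ?_, ⟨⟨?_, ?_⟩, ?_⟩⟩
  · intro n
    exact isCompact_iUnion fun j => ((hLc _ _).image (continuous_apply j))
  · rintro V ⟨n, rfl⟩
    exact isOpen_sUnion fun B hB => (hU n).1 B hB.1
  · apply Set.eq_univ_of_forall
    intro x
    obtain ⟨n, hn⟩ := key {x} (Set.finite_singleton x)
    exact ⟨st (K n) (U n), ⟨n, rfl⟩, hn rfl⟩
  · intro F hF
    obtain ⟨n, hn⟩ := key F hF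
    exact ⟨st (K n) (U n), ⟨n, rfl⟩, hn⟩
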